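/- arXiv:2103.04836 — 2 statements merged into one kernel-verified Lean document; each statement's English description precedes it below -/
import Mathlib

section
/- Let M be an additive abelian group, w an integer, N a natural number, and a : ℕ → M a function. Then ∑_{j=0}^{N} (-1)^j · ( ∑_{k=0}^{j} ε_{w-j+2k} ) · a(j) = ε_w · ∑_{k : 2k ≤ N} (-1)^k · a(2k), where for a sign ε ∈ {1,-1} and x ∈ M, ε·x means x if ε = 1 and -x if ε = -1. -/
private lemma eps_step (m : ℤ) :
    Int.negOnePow ((m + 2) * (m + 3) / 2) = - Int.negOnePow (m * (m + 1) / 2) := by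
  have h2 : (m + 2) * (m + 3) = m * (m + 1) + (2 * m + 3) * 2 := by ring
  have h : (m + 2) * (m + 3) / 2 = m * (m + 1) / 2 + (2 * m + 3) := by
    rw [h2, Int.add_mul_ediv_right _ _ two_ne_zero]
  rw [h, Int.negOnePow_add, Int.negOnePow_odd (2 * m + 3) ⟨m + 1, by ring⟩, mul_neg_one]

private lemma eps_shift (m : ℤ) (k : ℕ) :
    Int.negOnePow ((m + 2 * k) * (m + 2 * k + 1) / 2)
      = (-1) ^ k * Int.negOnePow (m * (m + 1) / 2) := by
  induction k generalizing m with
  | zero => simp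
  | succ k ih =>
    have h : (m + 2 * ((k : ℕ) + 1 : ℕ) : ℤ) = (m + 2) + 2 * k := by push_cast; ring
    rw [h, ih (m + 2)]
    have h3 : (m + 2) + 1 = m + 3 := by ring
    rw [h3, eps_step m, pow_succ, mul_assoc, neg_one_mul, mul_neg]

theorem lefschetz_sign_cancellation {M : Type*} [AddCommGroup M] (w : ℤ) (N : ℕ) (a : ℕ → M) :
    ∑ j ∈ Finset.range (N + 1),
        ((-1 : ℤ) ^ j *
          ∑ k ∈ Finset.range (j + 1),
            (Int.negOnePow ((w - j + 2 * k) * (w - j + 2 * k + 1) / 2) : ℤ)) • a j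
      = (Int.negOnePow (w * (w + 1) / 2) : ℤ) •
          ∑ k ∈ (Finset.range (N + 1)).filter (fun k => 2 * k ≤ N), ((-1 : ℤ) ^ k) • a (2 * k) := by
  -- inner sum evaluation
  have inner : ∀ j : ℕ, ((-1 : ℤ) ^ j *
      ∑ k ∈ Finset.range (j + 1),
        (Int.negOnePow ((w - j + 2 * k) * (w - j + 2 * k + 1) / 2) : ℤ))
      = if Even j then (Int.negOnePow ((w - j) * (w - j + 1) / 2) : ℤ) else 0 := by
    intro j
    have hsum : ∀ k : ℕ, (Int.negOnePow ((w - j + 2 * k) * (w - j + 2 * k + 1) / 2) : ℤ)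
        = (-1 : ℤ) ^ k * (Int.negOnePow ((w - j) * (w - j + 1) / 2) : ℤ) := by
      intro k
      rw [eps_shift (w - j) k]
      push_cast
      ring
    rw [Finset.sum_congr rfl (fun k _ => hsum k), ← Finset.sum_mul, neg_one_geom_sum]
    rcases Nat.even_or_odd j with he | ho
    · rw [if_neg (by simpa using he.add_one), if_pos he, he.neg_one_pow]
      ring
    · rw [if_pos (by simpa using ho.add_one), if_neg (by simpa using ho)]
      ring
  calc ∑ j ∈ Finset.range (N + 1),
        ((-1 : ℤ) ^ j *
          ∑ k ∈ Finset.range (j + 1),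
            (Int.negOnePow ((w - j + 2 * k) * (w - j + 2 * k + 1) / 2) : ℤ)) • a j
      = ∑ j ∈ Finset.range (N + 1),
          (if Even j then ((Int.negOnePow ((w - j) * (w - j + 1) / 2) : ℤ) • a j) else 0) := by
        refine Finset.sum_congr rfl fun j _ => ?_
        rw [inner j]
        split <;> simp
    _ = ∑ j ∈ (Finset.range (N + 1)).filter (fun j => Even j),
          (Int.negOnePow ((w - j) * (w - j + 1) / 2) : ℤ) • a j := by
        rw [Finset.sum_filter]
    _ = ∑ k ∈ (Finset.range (N + 1)).filter (fun k => 2 * k ≤ N),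
          ((Int.negOnePow (w * (w + 1) / 2) : ℤ) * (-1 : ℤ) ^ k) • a (2 * k) := by
        refine Finset.sum_nbij' (fun j => j / 2) (fun k => 2 * k) ?_ ?_ ?_ ?_ ?_
        · intro j hj
          simp only [Finset.mem_filter, Finset.mem_range] at hj ⊢
          obtain ⟨hj1, c, hc⟩ := hj
          omega
        · intro k hk
          simp only [Finset.mem_filter, Finset.mem_range] at hk ⊢
          exact ⟨by omega, ⟨k, by omega⟩⟩
        · intro j hj
          simp only [Finset.mem_filter, Finset.mem_range] at hj
          obtain ⟨hj1, c, hc⟩ := hj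
          show 2 * (j / 2) = j
          omega
        · intro k hk
          show (2 * k) / 2 = k
          omega
        · intro j hj
          simp only [Finset.mem_filter, Finset.mem_range] at hj
          obtain ⟨hj1, c, hc⟩ := hj
          have hj2 : j = 2 * (j / 2) := by omega
          rw [← hj2]
          congr 1
          -- sign identity: ε_{w-j} = ε_w * (-1)^(j/2)
          have := eps_shift (w - j) (j / 2)
          have hww : (w - j + 2 * (j / 2 : ℕ) : ℤ) = w := by
            have : (j : ℤ) = 2 * (j / 2 : ℕ) := by exact_mod_cast hj2
            omega
          rw [hww] at this
          have h2 : Int.negOnePow ((w - j) * (w - j + 1) / 2)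
              = (-1) ^ (j / 2) * Int.negOnePow (w * (w + 1) / 2) := by
            rw [this]
            rw [← mul_assoc, ← pow_add, ← two_mul]
            simp [pow_mul]
          rw [h2]
          push_cast
          ring
    _ = (Int.negOnePow (w * (w + 1) / 2) : ℤ) •
          ∑ k ∈ (Finset.range (N + 1)).filter (fun k => 2 * k ≤ N), ((-1 : ℤ) ^ k) • a (2 * k) := by
        rw [Finset.smul_sum]
        refine Finset.sum_congr rfl fun k _ => ?_
        rw [smul_smul]
end

section
/- Let V be a finite-dimensional real vector space with a nondegenerate symmetric bilinear form S' , and suppose V admits subspaces W₁ ⊆ W₀ ⊆ V such that S'(W₀, W₁) = 0, W₁ = W₀^⊥ (the S'-orthogonal complement of W₀), and the form induced by S' on W₀/W₁ is a given nondegenerate symmetric form S. Then the signature of S' equals the signature of S. -/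
open Module

set_option maxHeartbeats 1000000


/-- The maximal dimension of a subspace on which the bilinear form is positive definite. -/
noncomputable def posIndex {V : Type*} [AddCommGroup V] [Module ℝ V]
    (B : V →ₗ[ℝ] V →ₗ[ℝ] ℝ) : ℕ :=
  sSup {n : ℕ | ∃ W : Submodule ℝ V, Module.finrank ℝ W = n ∧
    ∀ w ∈ W, w ≠ 0 → 0 < B w w}

/-- The signature of a bilinear form: maximal dimension of a positive-definite subspace
minus maximal dimension of a negative-definite subspace. -/
noncomputable def signature {V : Type*} [AddCommGroup V] [Module ℝ V]
    (B : V →ₗ[ℝ] V →ₗ[ℝ] ℝ) : ℤ :=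
  (posIndex B : ℤ) - (posIndex (-B) : ℤ)

section Lemmas

variable {V : Type*} [AddCommGroup V] [Module ℝ V] [FiniteDimensional ℝ V]


lemma posIndex_bdd (B : V →ₗ[ℝ] V →ₗ[ℝ] ℝ) :
    BddAbove {n : ℕ | ∃ W : Submodule ℝ V, Module.finrank ℝ W = n ∧
      ∀ w ∈ W, w ≠ 0 → 0 < B w w} := by
  refine ⟨finrank ℝ V, fun n hn => ?_⟩
  obtain ⟨W, rfl, -⟩ := hn
  exact Submodule.finrank_le W

lemma le_posIndex (B : V →ₗ[ℝ] V →ₗ[ℝ] ℝ) (W : Submodule ℝ V)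
    (h : ∀ w ∈ W, w ≠ 0 → 0 < B w w) : finrank ℝ W ≤ posIndex B :=
  le_csSup (posIndex_bdd B) ⟨W, rfl, h⟩

lemma exists_posIndex (B : V →ₗ[ℝ] V →ₗ[ℝ] ℝ) :
    ∃ W : Submodule ℝ V, finrank ℝ W = posIndex B ∧
      ∀ w ∈ W, w ≠ 0 → 0 < B w w := by
  have hne : {n : ℕ | ∃ W : Submodule ℝ V, Module.finrank ℝ W = n ∧
      ∀ w ∈ W, w ≠ 0 → 0 < B w w}.Nonempty :=
    ⟨0, ⊥, finrank_bot ℝ V, by simp⟩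
  have := Nat.sSup_mem hne (posIndex_bdd B)
  exact this

lemma posIndex_add_posIndex_neg_le (B : V →ₗ[ℝ] V →ₗ[ℝ] ℝ) :
    posIndex B + posIndex (-B) ≤ finrank ℝ V := by
  obtain ⟨P, hPr, hP⟩ := exists_posIndex B
  obtain ⟨N, hNr, hN⟩ := exists_posIndex (-B)
  have hdisj : P ⊓ N = ⊥ := by
    rw [Submodule.eq_bot_iff]
    intro w hw
    by_contra hw0
    have h1 := hP w hw.1 hw0
    have h2 := hN w hw.2 hw0
    simp only [LinearMap.neg_apply, Pi.neg_apply] at h2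
    linarith
  have := Submodule.finrank_sup_add_finrank_inf_eq P N
  rw [hdisj] at this
  simp only [finrank_bot, add_zero] at this
  calc posIndex B + posIndex (-B) = finrank ℝ ↥(P ⊔ N) := by rw [← hPr, ← hNr, ← this]
  _ ≤ finrank ℝ V := Submodule.finrank_le _

lemma pos_of_mem_span (B : V →ₗ[ℝ] V →ₗ[ℝ] ℝ) {ι : Type*} [Fintype ι] (v : ι → V)
    (horth : ∀ i j, i ≠ j → B (v i) (v j) = 0)
    (hpos : ∀ i, 0 < B (v i) (v i)) :
    ∀ w ∈ Submodule.span ℝ (Set.range v), w ≠ 0 → 0 < B w w := by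
  intro w hw hw0
  rw [Submodule.mem_span_range_iff_exists_fun] at hw
  obtain ⟨c, rfl⟩ := hw
  have hBw : B (∑ i, c i • v i) (∑ i, c i • v i)
      = ∑ i, c i ^ 2 * B (v i) (v i) := by
    simp only [map_sum, map_smul, LinearMap.coe_sum, Finset.sum_apply,
      LinearMap.smul_apply, smul_eq_mul]
    refine Finset.sum_congr rfl fun i _ => ?_
    rw [Finset.sum_eq_single i]
    · ring
    · intro j _ hj
      rw [horth j i hj]; ring
    · intro h; exact absurd (Finset.mem_univ i) h
  rw [hBw]
  have hc : ∃ i, c i ≠ 0 := by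
    by_contra h
    push_neg at h
    exact hw0 (by simp [h])
  obtain ⟨i, hi⟩ := hc
  refine Finset.sum_pos' (fun j _ => ?_) ⟨i, Finset.mem_univ i, ?_⟩
  · exact mul_nonneg (sq_nonneg _) (hpos j).le
  · exact mul_pos (by positivity) (hpos i)

lemma card_le_posIndex (B : V →ₗ[ℝ] V →ₗ[ℝ] ℝ) {ι : Type*} [Fintype ι] (v : ι → V)
    (hli : LinearIndependent ℝ v)
    (horth : ∀ i j, i ≠ j → B (v i) (v j) = 0)
    (hpos : ∀ i, 0 < B (v i) (v i)) :
    Fintype.card ι ≤ posIndex B := by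
  have := le_posIndex B (Submodule.span ℝ (Set.range v)) (pos_of_mem_span B v horth hpos)
  rwa [finrank_span_eq_card hli] at this

lemma finrank_le_posIndex_add (B : V →ₗ[ℝ] V →ₗ[ℝ] ℝ)
    (hsymm : ∀ u v, B u v = B v u)
    (hnd : ∀ v, (∀ w, B v w = 0) → v = 0) :
    finrank ℝ V ≤ posIndex B + posIndex (-B) := by
  have hBsymm : B.IsSymm := ⟨fun x y => hsymm x y⟩
  obtain ⟨b, hb⟩ := LinearMap.BilinForm.exists_orthogonal_basis hBsymm
  have hb' : ∀ i j, i ≠ j → B (b i) (b j) = 0 := fun i j hij => hb hij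
  have hd : ∀ i, B (b i) (b i) ≠ 0 := by
    intro i h
    refine b.ne_zero i (hnd (b i) fun w => ?_)
    have : B (b i) = 0 := b.ext fun j => by
      rcases eq_or_ne i j with rfl | hij
      · simpa using h
      · simpa using hb' i j hij
    simp [this]
  classical
  set s : Finset (Fin (finrank ℝ V)) := Finset.univ.filter (fun i => 0 < B (b i) (b i))
    with hs
  have hmem : ∀ i, i ∈ s ↔ 0 < B (b i) (b i) := by
    intro i; rw [hs, Finset.mem_filter]; simp
  have h1 : s.card ≤ posIndex B := by
    have := card_le_posIndex B (fun i : s => b i)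
      (b.linearIndependent.comp Subtype.val Subtype.val_injective)
      (fun i j hij => hb' i j (fun h => hij (Subtype.ext h)))
      (fun i => (hmem i).mp i.2)
    simpa using this
  have h2 : sᶜ.card ≤ posIndex (-B) := by
    have := card_le_posIndex (-B) (fun i : (sᶜ : Finset (Fin (finrank ℝ V))) => b i)
      (b.linearIndependent.comp Subtype.val Subtype.val_injective)
      (fun i j hij => by
        simp only [LinearMap.neg_apply, Pi.neg_apply, neg_eq_zero]
        exact hb' i j (fun h => hij (Subtype.ext h)))
      (fun i => by
        have hi : ¬ (0 < B (b i) (b i)) := by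
          have := Finset.mem_compl.mp i.2
          rw [hmem] at this
          exact this
        have : B (b i) (b i) < 0 := lt_of_le_of_ne (not_lt.mp hi) (hd i)
        simp only [LinearMap.neg_apply, Pi.neg_apply]
        linarith)
    rwa [Fintype.card_coe] at this
  have hcard := Finset.card_add_card_compl s
  rw [Fintype.card_fin] at hcard
  omega

theorem exists_dual_family (S' : V →ₗ[ℝ] V →ₗ[ℝ] ℝ)
    (hS'symm : ∀ u v, S' u v = S' v u)
    (hS'nd : ∀ v, (∀ w, S' v w = 0) → v = 0)
    (W₀ W₁ : Submodule ℝ V) (hWle : W₁ ≤ W₀)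
    (horth : ∀ u ∈ W₀, ∀ v ∈ W₁, S' u v = 0)
    (P' : Submodule ℝ V) (hP'le : P' ≤ W₀)
    (hP'pos : ∀ w ∈ P', w ≠ 0 → 0 < S' w w) :
    ∃ f : Fin (finrank ℝ W₁) → V,
      (∀ i j, S' (f i) ((Module.finBasis ℝ W₁ j : V)) = if i = j then 1 else 0) ∧
      (∀ i j, S' (f i) (f j) = 0) ∧
      (∀ i, ∀ u ∈ P', S' (f i) u = 0) := by
  classical
  set d := finrank ℝ W₁
  set e := Module.finBasis ℝ W₁ with he
  set ev : Fin d → V := fun i => (e i : V) with hev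
  have hevW₁ : ∀ i, ev i ∈ W₁ := fun i => (e i).2
  have hevev : ∀ k l, S' (ev k) (ev l) = 0 := fun k l =>
    horth (ev k) (hWle (hevW₁ k)) (ev l) (hevW₁ l)
  have hnd : LinearMap.BilinForm.Nondegenerate S' :=
    ⟨hS'nd, fun y hy => hS'nd y (fun x => by rw [hS'symm]; exact hy x)⟩
  -- Step A: dual family f'
  have hΦsurj : Function.Surjective
      (W₁.dualRestrict.comp (LinearMap.BilinForm.toDual S' hnd).toLinearMap) :=
    (Subspace.dualRestrict_surjective).comp (LinearMap.BilinForm.toDual S' hnd).surjective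
  choose f' hf' using fun i => hΦsurj (e.coord i)
  have hf'e : ∀ i j, S' (f' i) (ev j) = if i = j then 1 else 0 := by
    intro i j
    have := congrArg (fun φ => φ (e j)) (hf' i)
    simp only [LinearMap.comp_apply, Submodule.dualRestrict_apply,
      LinearEquiv.coe_coe] at this
    rw [show ((LinearMap.BilinForm.toDual S' hnd) (f' i)) (e j) = S' (f' i) (ev j) from rfl]
      at this
    rw [this, Basis.coord_apply, Basis.repr_self]
    simp [Finsupp.single_apply, eq_comm]
  -- Step B: orthogonalize against P'
  have hΘ : ∀ (ψ : Module.Dual ℝ P'), ∃ x : P', ∀ u : P', S' x u = ψ u := by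
    intro ψ
    set Θ : P' →ₗ[ℝ] Module.Dual ℝ P' := LinearMap.domRestrict₁₂ S' P' P' with hΘdef
    have hΘapp : ∀ (x u : P'), Θ x u = S' x u := fun x u => rfl
    have hΘinj : Function.Injective Θ := by
      rw [← LinearMap.ker_eq_bot, Submodule.eq_bot_iff]
      intro x hx
      by_contra h0
      have hx0 : (x : V) ≠ 0 := fun hh => h0 (Subtype.ext hh)
      have hpos := hP'pos x.1 x.2 hx0
      have hzero : S' x.1 x.1 = 0 := by
        have := congrArg (fun φ => φ x) hx
        simpa [hΘapp] using this
      linarith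
    have hΘsurj : Function.Surjective Θ := by
      rw [← LinearMap.range_eq_top]
      apply Submodule.eq_top_of_finrank_eq
      rw [LinearMap.finrank_range_of_inj hΘinj]
      exact (Subspace.dual_finrank_eq).symm
    obtain ⟨x, hx⟩ := hΘsurj ψ
    exact ⟨x, fun u => by
      have := congrArg (fun φ => φ u) hx
      simpa [hΘapp] using this⟩
  choose c hc using fun i => hΘ ((S' (f' i)).comp P'.subtype)
  set f'' : Fin d → V := fun i => f' i - (c i : V) with hf''def
  have hf''e : ∀ i j, S' (f'' i) (ev j) = if i = j then 1 else 0 := by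
    intro i j
    simp only [hf''def, map_sub, LinearMap.sub_apply]
    rw [horth (c i : V) (hP'le (c i).2) (ev j) (hevW₁ j), hf'e, sub_zero]
  have hf''P : ∀ i, ∀ u ∈ P', S' (f'' i) u = 0 := by
    intro i u hu
    simp only [hf''def, map_sub, LinearMap.sub_apply]
    have := hc i ⟨u, hu⟩
    simp only [LinearMap.comp_apply, Submodule.coe_subtype] at this
    rw [this]; ring
  -- Step C: kill mutual pairings
  set a : Fin d → Fin d → ℝ := fun i j => S' (f'' i) (f'' j) with ha
  have hasymm : ∀ i j, a i j = a j i := fun i j => hS'symm _ _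
  set f : Fin d → V := fun i => f'' i - (1/2 : ℝ) • ∑ j, a i j • ev j with hfdef
  have hexp : ∀ (x : V) (j : Fin d),
      S' x (f j) = S' x (f'' j) - (1/2) * ∑ k, a j k * S' x (ev k) := by
    intro x j
    simp only [hfdef, map_sub, map_smul, map_sum, smul_eq_mul, Finset.mul_sum]
  have hevf : ∀ k j, S' (ev k) (f j) = if j = k then 1 else 0 := by
    intro k j
    rw [hexp]
    have h1 : S' (ev k) (f'' j) = if j = k then 1 else 0 := by
      rw [hS'symm]; exact hf''e j k
    have h2 : ∀ l, a j l * S' (ev k) (ev l) = 0 := fun l => by rw [hevev]; ring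
    rw [h1, Finset.sum_congr rfl (fun l _ => h2 l)]
    simp
  have hfe : ∀ i j, S' (f i) (ev j) = if i = j then 1 else 0 := by
    intro i j
    rw [hS'symm, hevf]
  have hf''f : ∀ i j, S' (f'' i) (f j) = a i j - (1/2) * a j i := by
    intro i j
    rw [hexp]
    have h1 : ∀ k, a j k * S' (f'' i) (ev k) = if i = k then a j k else 0 := fun k => by
      rw [hf''e]; split <;> ring
    rw [Finset.sum_congr rfl (fun k _ => h1 k), Finset.sum_ite_eq]
    simp [ha]
  have hff : ∀ i j, S' (f i) (f j) = 0 := by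
    intro i j
    have expand : S' (f i) (f j)
        = S' (f'' i) (f j) - (1/2) * ∑ k, a i k * S' (ev k) (f j) := by
      rw [hS'symm (f i) (f j), hexp (f j) i, hS'symm (f j) (f'' i)]
      congr 2
      exact Finset.sum_congr rfl fun k _ => by rw [hS'symm (f j) (ev k)]
    have h2 : ∀ k, a i k * S' (ev k) (f j) = if j = k then a i k else 0 := fun k => by
      rw [hevf]; split <;> ring
    rw [expand, hf''f, Finset.sum_congr rfl (fun k _ => h2 k), Finset.sum_ite_eq]
    simp only [Finset.mem_univ, if_true]
    rw [hasymm i j]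
    ring
  have hfP : ∀ i, ∀ u ∈ P', S' (f i) u = 0 := by
    intro i u hu
    rw [hS'symm, hexp]
    have h1 : S' u (f'' i) = 0 := by rw [hS'symm]; exact hf''P i u hu
    have h2 : ∀ k, a i k * S' u (ev k) = 0 := fun k => by
      rw [horth u (hP'le hu) (ev k) (hevW₁ k)]; ring
    rw [h1, Finset.sum_congr rfl (fun k _ => h2 k)]
    simp
  exact ⟨f, hfe, hff, hfP⟩

theorem exists_lift (S' : V →ₗ[ℝ] V →ₗ[ℝ] ℝ)
    (hS'symm : ∀ u v, S' u v = S' v u)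
    (hS'nd : ∀ v, (∀ w, S' v w = 0) → v = 0)
    (W₀ W₁ : Submodule ℝ V) (hWle : W₁ ≤ W₀)
    (horth : ∀ u ∈ W₀, ∀ v ∈ W₁, S' u v = 0)
    (S : (W₀ ⧸ W₁.comap W₀.subtype) →ₗ[ℝ] (W₀ ⧸ W₁.comap W₀.subtype) →ₗ[ℝ] ℝ)
    (hinduced : ∀ u v : W₀,
      S ((W₁.comap W₀.subtype).mkQ u) ((W₁.comap W₀.subtype).mkQ v) = S' u v)
    (P : Submodule ℝ (W₀ ⧸ W₁.comap W₀.subtype))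
    (hPpos : ∀ w ∈ P, w ≠ 0 → 0 < S w w) :
    ∃ P' : Submodule ℝ V, P' ≤ W₀ ∧ finrank ℝ P' = finrank ℝ P ∧
      (∀ w ∈ P', w ≠ 0 → 0 < S' w w) := by
  classical
  obtain ⟨σ, hσ⟩ := (W₁.comap W₀.subtype).mkQ.exists_rightInverse_of_surjective (Submodule.range_mkQ _)
  have hσ' : ∀ x, (W₁.comap W₀.subtype).mkQ (σ x) = x := fun x => congrArg (fun φ => φ x) hσ
  set ρ : (W₀ ⧸ W₁.comap W₀.subtype) →ₗ[ℝ] V := W₀.subtype.comp σ with hρ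
  have hρinj : Function.Injective ρ := by
    rw [← LinearMap.ker_eq_bot, Submodule.eq_bot_iff]
    intro x hx
    have : (σ x : V) = 0 := hx
    have hσ0 : σ x = 0 := Subtype.ext this
    rw [← hσ' x, hσ0, map_zero]
  refine ⟨P.map ρ, ?_, ?_, ?_⟩
  · rintro w ⟨x, -, rfl⟩
    exact (σ x).2
  · exact (LinearEquiv.finrank_eq (Submodule.equivMapOfInjective ρ hρinj P)).symm
  · rintro w ⟨x, hxP, rfl⟩ hw0
    have hx0 : x ≠ 0 := by rintro rfl; simp at hw0
    have : S' (ρ x) (ρ x) = S x x := by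
      show S' ((σ x : W₀) : V) ((σ x : W₀) : V) = S x x
      rw [← hinduced (σ x) (σ x), hσ' x]
    rw [this]
    exact hPpos x hxP hx0

-- combine P' and hyperbolic family into a big positive subspace
theorem combine_pos (S' : V →ₗ[ℝ] V →ₗ[ℝ] ℝ)
    (hS'symm : ∀ u v, S' u v = S' v u)
    (W₀ W₁ : Submodule ℝ V) (hWle : W₁ ≤ W₀)
    (horth : ∀ u ∈ W₀, ∀ v ∈ W₁, S' u v = 0)
    (P' : Submodule ℝ V) (hP'le : P' ≤ W₀)
    (hP'pos : ∀ w ∈ P', w ≠ 0 → 0 < S' w w)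
    (f : Fin (finrank ℝ W₁) → V)
    (hfe : ∀ i j, S' (f i) ((Module.finBasis ℝ W₁ j : V)) = if i = j then 1 else 0)
    (hff : ∀ i j, S' (f i) (f j) = 0)
    (hfP : ∀ i, ∀ u ∈ P', S' (f i) u = 0) :
    finrank ℝ P' + finrank ℝ W₁ ≤ posIndex S' := by
  classical
  set e := Module.finBasis ℝ W₁ with he
  set ev : Fin (finrank ℝ W₁) → V := fun i => (e i : V) with hev
  have hevW₁ : ∀ i, ev i ∈ W₁ := fun i => (e i).2
  have hevev : ∀ k l, S' (ev k) (ev l) = 0 := fun k l =>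
    horth (ev k) (hWle (hevW₁ k)) (ev l) (hevW₁ l)
  set g : Fin (finrank ℝ W₁) → V := fun i => ev i + f i with hg
  -- pairing of g's
  have hgg : ∀ i j, S' (g i) (g j) = if i = j then 2 else 0 := by
    intro i j
    simp only [hg, map_add, LinearMap.add_apply]
    rw [hevev i j, hff i j]
    have h1 : S' (ev i) (f j) = if j = i then 1 else 0 := by
      rw [hS'symm]; exact hfe j i
    have h2 : S' (f i) (ev j) = if i = j then 1 else 0 := hfe i j
    rw [h1, h2]
    rcases eq_or_ne i j with rfl | hij
    · norm_num
    · simp [hij, Ne.symm hij]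
  have hug : ∀ u ∈ P', ∀ j, S' u (g j) = 0 := by
    intro u hu j
    simp only [hg, map_add]
    rw [horth u (hP'le hu) (ev j) (hevW₁ j)]
    rw [hS'symm u (f j), hfP j u hu]
    simp
  have hgu : ∀ u ∈ P', ∀ j, S' (g j) u = 0 := fun u hu j => by
    rw [hS'symm]; exact hug u hu j
  -- basis of P'
  set p : Basis (Fin (finrank ℝ P')) ℝ P' := Module.finBasis ℝ P' with hp
  set v : Fin (finrank ℝ P') ⊕ Fin (finrank ℝ W₁) → V := Sum.elim (fun i => (p i : V)) g with hv
  -- the master computation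
  have hmaster : ∀ c : Fin (finrank ℝ P') ⊕ Fin (finrank ℝ W₁) → ℝ,
      S' (∑ k, c k • v k) (∑ k, c k • v k)
        = S' (∑ i, c (.inl i) • (p i : V)) (∑ i, c (.inl i) • (p i : V))
          + 2 * ∑ j, (c (.inr j))^2 := by
    intro c
    rw [Fintype.sum_sum_type]
    have hvinl : ∀ i, v (Sum.inl i) = (p i : V) := fun i => rfl
    have hvinr : ∀ j, v (Sum.inr j) = g j := fun j => rfl
    simp only [hvinl, hvinr]
    set u : V := ∑ i, c (.inl i) • (p i : V) with hu
    set z : V := ∑ j, c (.inr j) • g j with hz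
    have huP' : u ∈ P' := Submodule.sum_mem _ fun i _ => Submodule.smul_mem _ _ (p i).2
    simp only [map_add, LinearMap.add_apply]
    have huz : S' u z = 0 := by
      rw [hz, map_sum]
      refine Finset.sum_eq_zero fun j _ => ?_
      rw [map_smul, hug u huP' j]
      simp
    have hzu : S' z u = 0 := (hS'symm z u).trans huz
    have hzz : S' z z = 2 * ∑ j, (c (.inr j))^2 := by
      rw [hz]
      simp only [map_sum, map_smul, LinearMap.coe_sum, Finset.sum_apply,
        LinearMap.smul_apply, smul_eq_mul]
      rw [Finset.mul_sum]
      refine Finset.sum_congr rfl fun j _ => ?_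
      rw [Finset.sum_eq_single j]
      · rw [hgg j j]; simp; ring
      · intro b _ hb
        rw [hgg b j, if_neg hb]; ring
      · intro h; exact absurd (Finset.mem_univ j) h
    rw [huz, hzu, hzz]; ring
  -- positivity on the span
  have hspan_pos : ∀ w ∈ Submodule.span ℝ (Set.range v), w ≠ 0 → 0 < S' w w := by
    intro w hw hw0
    rw [Submodule.mem_span_range_iff_exists_fun] at hw
    obtain ⟨c, rfl⟩ := hw
    rw [hmaster c]
    set u : V := ∑ i, c (.inl i) • (p i : V) with hu
    have huP' : u ∈ P' := Submodule.sum_mem _ fun i _ => Submodule.smul_mem _ _ (p i).2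
    have husq : 0 ≤ S' u u := by
      rcases eq_or_ne u 0 with h | h
      · simp [h]
      · exact (hP'pos u huP' h).le
    have hsq : 0 ≤ ∑ j, (c (.inr j))^2 :=
      Finset.sum_nonneg fun j _ => sq_nonneg _
    rcases eq_or_ne u 0 with hu0 | hu0
    · have hcr : ∃ j, c (.inr j) ≠ 0 := by
        by_contra h
        push_neg at h
        refine hw0 ?_
        rw [Fintype.sum_sum_type]
        have : ∀ j, c (.inr j) • v (.inr j) = 0 := fun j => by rw [h j, zero_smul]
        rw [Finset.sum_congr rfl (fun j _ => this j)]
        have : (∑ i, c (.inl i) • v (.inl i)) = u := rfl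
        rw [this, hu0]
        simp
      obtain ⟨j, hj⟩ := hcr
      have : 0 < ∑ j, (c (.inr j))^2 :=
        Finset.sum_pos' (fun k _ => sq_nonneg _) ⟨j, Finset.mem_univ j, by positivity⟩
      linarith
    · have := hP'pos u huP' hu0
      linarith
  -- linear independence
  have hli : LinearIndependent ℝ v := by
    rw [Fintype.linearIndependent_iff]
    intro c hc
    have h0 : S' (∑ k, c k • v k) (∑ k, c k • v k) = 0 := by rw [hc]; simp
    rw [hmaster c] at h0
    set u : V := ∑ i, c (.inl i) • (p i : V) with hu
    have huP' : u ∈ P' := Submodule.sum_mem _ fun i _ => Submodule.smul_mem _ _ (p i).2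
    have husq : 0 ≤ S' u u := by
      rcases eq_or_ne u 0 with h | h
      · simp [h]
      · exact (hP'pos u huP' h).le
    have hsq : 0 ≤ ∑ j, (c (.inr j))^2 :=
      Finset.sum_nonneg fun j _ => sq_nonneg _
    have hsq0 : ∑ j, (c (.inr j))^2 = 0 := by linarith
    have hcr : ∀ j, c (.inr j) = 0 := by
      intro j
      have := (Finset.sum_eq_zero_iff_of_nonneg fun k _ => sq_nonneg (c (.inr k))).mp hsq0
        j (Finset.mem_univ j)
      exact pow_eq_zero_iff (by norm_num) |>.mp this
    have huu0 : S' u u = 0 := by linarith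
    have hu0 : u = 0 := by
      by_contra h
      exact absurd huu0 (ne_of_gt (hP'pos u huP' h))
    have hcl : ∀ i, c (.inl i) = 0 := by
      intro i
      have hsum : (∑ i, c (.inl i) • p i : P') = 0 := by
        apply Subtype.ext
        push_cast
        rw [← hu0, hu]
      have := linearIndependent_iff'.mp p.linearIndependent Finset.univ
        (fun i => c (.inl i)) hsum i (Finset.mem_univ i)
      exact this
    intro k
    rcases k with i | j
    · exact hcl i
    · exact hcr j
  -- conclude
  have hle := le_posIndex S' (Submodule.span ℝ (Set.range v)) hspan_pos
  rw [finrank_span_eq_card hli] at hle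
  simpa using hle


theorem key_ineq (S' : V →ₗ[ℝ] V →ₗ[ℝ] ℝ)
    (hS'symm : ∀ u v, S' u v = S' v u)
    (hS'nd : ∀ v, (∀ w, S' v w = 0) → v = 0)
    (W₀ W₁ : Submodule ℝ V) (hWle : W₁ ≤ W₀)
    (horth : ∀ u ∈ W₀, ∀ v ∈ W₁, S' u v = 0)
    (S : (W₀ ⧸ W₁.comap W₀.subtype) →ₗ[ℝ] (W₀ ⧸ W₁.comap W₀.subtype) →ₗ[ℝ] ℝ)
    (hinduced : ∀ u v : W₀,
      S ((W₁.comap W₀.subtype).mkQ u) ((W₁.comap W₀.subtype).mkQ v) = S' u v) :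
    posIndex S + finrank ℝ W₁ ≤ posIndex S' := by
  obtain ⟨P, hPrank, hPpos⟩ := exists_posIndex S
  obtain ⟨P', hP'le, hP'rank, hP'pos⟩ := exists_lift S' hS'symm hS'nd W₀ W₁ hWle horth S
    hinduced P hPpos
  obtain ⟨f, hfe, hff, hfP⟩ := exists_dual_family S' hS'symm hS'nd W₀ W₁ hWle horth P'
    hP'le hP'pos
  have h := combine_pos S' hS'symm W₀ W₁ hWle horth P' hP'le hP'pos f hfe hff hfP
  rw [hP'rank, hPrank] at h
  exact h

end Lemmas

theorem signature_of_sublagrangian_reduction {V : Type*} [AddCommGroup V] [Module ℝ V]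
    [FiniteDimensional ℝ V]
    (S' : V →ₗ[ℝ] V →ₗ[ℝ] ℝ)
    (hS'symm : ∀ u v, S' u v = S' v u)
    (hS'nd : ∀ v, (∀ w, S' v w = 0) → v = 0)
    (W₀ W₁ : Submodule ℝ V) (hWle : W₁ ≤ W₀)
    (horth : ∀ u ∈ W₀, ∀ v ∈ W₁, S' u v = 0)
    (hperp : ∀ v : V, v ∈ W₁ ↔ ∀ w ∈ W₀, S' v w = 0)
    (S : (W₀ ⧸ W₁.comap W₀.subtype) →ₗ[ℝ] (W₀ ⧸ W₁.comap W₀.subtype) →ₗ[ℝ] ℝ)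
    (hSsymm : ∀ u v, S u v = S v u)
    (hSnd : ∀ v, (∀ w, S v w = 0) → v = 0)
    (hinduced : ∀ u v : W₀,
      S ((W₁.comap W₀.subtype).mkQ u) ((W₁.comap W₀.subtype).mkQ v) = S' u v) :
    signature S' = signature S := by
  classical
  have hnd : LinearMap.BilinForm.Nondegenerate S' :=
    ⟨hS'nd, fun y hy => hS'nd y (fun x => by rw [hS'symm]; exact hy x)⟩
  -- dimension count : finrank W₀ + finrank W₁ = finrank V
  have hdim : finrank ℝ W₀ + finrank ℝ W₁ = finrank ℝ V := by
    set Ψ := W₀.dualRestrict.comp (LinearMap.BilinForm.toDual S' hnd).toLinearMap with hΨ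
    have hker : LinearMap.ker Ψ = W₁ := by
      ext v
      rw [LinearMap.mem_ker, hperp v]
      constructor
      · intro h w hw
        have := congrArg (fun φ => φ ⟨w, hw⟩) h
        simpa [hΨ, LinearMap.BilinForm.toDual_def] using this
      · intro h
        ext w
        have := h w.1 w.2
        simpa [hΨ, LinearMap.BilinForm.toDual_def] using this
    have hsurj : Function.Surjective Ψ :=
      (Subspace.dualRestrict_surjective).comp (LinearMap.BilinForm.toDual S' hnd).surjective
    have hrn := LinearMap.finrank_range_add_finrank_ker Ψ
    rw [hker, LinearMap.range_eq_top.mpr hsurj, finrank_top] at hrn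
    rw [← hrn, Subspace.dual_finrank_eq]
  have hQdim : finrank ℝ (W₀ ⧸ W₁.comap W₀.subtype) + finrank ℝ W₁ = finrank ℝ W₀ := by
    have h1 := Submodule.finrank_quotient_add_finrank (W₁.comap W₀.subtype)
    have h2 : finrank ℝ (W₁.comap W₀.subtype) = finrank ℝ W₁ :=
      LinearEquiv.finrank_eq (Submodule.comapSubtypeEquivOfLe hWle)
    rw [h2] at h1
    exact h1
  -- the four inequalities
  have h5 : posIndex S + finrank ℝ W₁ ≤ posIndex S' :=
    key_ineq S' hS'symm hS'nd W₀ W₁ hWle horth S hinduced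
  have h5' : posIndex (-S) + finrank ℝ W₁ ≤ posIndex (-S') := by
    refine key_ineq (-S') (fun u v => by simp [hS'symm u v])
      (fun v hv => hS'nd v (fun w => by simpa using hv w))
      W₀ W₁ hWle (fun u hu v hv => by simp [horth u hu v hv]) (-S)
      (fun u v => by simpa using hinduced u v)
  have h3 : posIndex S' + posIndex (-S') ≤ finrank ℝ V :=
    posIndex_add_posIndex_neg_le S'
  have h4 : finrank ℝ (W₀ ⧸ W₁.comap W₀.subtype) ≤ posIndex S + posIndex (-S) :=
    finrank_le_posIndex_add S hSsymm hSnd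
  have hp : posIndex S' = posIndex S + finrank ℝ W₁ := by omega
  have hn : posIndex (-S') = posIndex (-S) + finrank ℝ W₁ := by omega
  rw [signature, signature, hp, hn]
  push_cast
  ring
end
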